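/- Let H be a traceless Hermitian operator on (ℂ²)^{⊗n} with Pauli expansion H = Σ_{s≠I^n} Ĥ_s s₁⊗⋯⊗s_n where each term has weight |s| ≤ k (k-locality), and suppose each qubit participates in at most ℓ terms with nonzero coefficient. Then λ_max(H) ≥ 3^{−k/2} ‖Ĥ‖₁ / (4kℓ), where ‖Ĥ‖₁ = Σ_s |Ĥ_s|. Moreover this value is achieved by a tensor product of single-qubit states. -/

import Mathlib

noncomputable section
open Complex Matrix
open scoped Classical

/-- Pauli X matrix. -/
def σX : Matrix (Fin 2) (Fin 2) ℂ := !![0, 1; 1, 0]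
/-- Pauli Y matrix. -/
def σY : Matrix (Fin 2) (Fin 2) ℂ := !![0, -I; I, 0]
/-- Pauli Z matrix. -/
def σZ : Matrix (Fin 2) (Fin 2) ℂ := !![1, 0; 0, -1]

/-- The four Pauli matrices I, X, Y, Z. -/
def pauli : Fin 4 → Matrix (Fin 2) (Fin 2) ℂ := ![1, σX, σY, σZ]

/-- The n-qubit Pauli string s₁ ⊗ s₂ ⊗ ⋯ ⊗ sₙ, as a matrix indexed by Fin n → Fin 2. -/
def pauliString {n : ℕ} (s : Fin n → Fin 4) :
    Matrix (Fin n → Fin 2) (Fin n → Fin 2) ℂ :=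
  fun v w => ∏ i, pauli (s i) (v i) (w i)

/-- The Hamiltonian H = Σ_s Ĥ_s s₁⊗⋯⊗sₙ with real Pauli coefficients Ĥ. -/
def hamOf {n : ℕ} (Hhat : (Fin n → Fin 4) → ℝ) :
    Matrix (Fin n → Fin 2) (Fin n → Fin 2) ℂ :=
  ∑ s : Fin n → Fin 4, (Hhat s : ℂ) • pauliString s

/-- The weight |s| of a Pauli string: the number of non-identity tensor factors. -/
def weight {n : ℕ} (s : Fin n → Fin 4) : ℕ :=
  (Finset.univ.filter (fun i => s i ≠ 0)).card

/-- The product state ψ₁ ⊗ ⋯ ⊗ ψₙ. -/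
def prodState {n : ℕ} (ψ : Fin n → Fin 2 → ℂ) : (Fin n → Fin 2) → ℂ :=
  fun v => ∏ i, ψ i (v i)

/-- Expectation value ⟨Ψ|M|Ψ⟩ for an n-qubit operator. -/
def expValN {n : ℕ} (M : Matrix (Fin n → Fin 2) (Fin n → Fin 2) ℂ)
    (Ψ : (Fin n → Fin 2) → ℂ) : ℂ :=
  ∑ v, ∑ w, (starRingEnd ℂ) (Ψ v) * M v w * Ψ w

/-- The state |ψ₊₊⟩ = (√(3+√3)|0⟩ + e^{iπ/4}√(3-√3)|1⟩)/√6. -/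
def ψpp : Fin 2 → ℂ :=
  ![(Real.sqrt (3 + Real.sqrt 3) : ℂ) / (Real.sqrt 6 : ℂ),
    Complex.exp (Real.pi * I / 4) * (Real.sqrt (3 - Real.sqrt 3) : ℂ) / (Real.sqrt 6 : ℂ)]

/-- Pauli correction selecting a tetrahedron state: (+,+)↦I, (−,+)↦Z, (+,−)↦X, (−,−)↦Y. -/
def tetraM (a b : ℝ) : Matrix (Fin 2) (Fin 2) ℂ :=
  if a = 1 then (if b = 1 then 1 else σX) else (if b = 1 then σZ else σY)

/-- The tetrahedron state labelled by (a,b) ∈ {±1}². -/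
def tetra (a b : ℝ) : Fin 2 → ℂ := (tetraM a b).mulVec ψpp

set_option linter.unusedSectionVars false
set_option maxHeartbeats 1000000

namespace Comb
variable {V : Type*} [Fintype V] [DecidableEq V]
def chi (x : V → ℝ) (S : Finset V) : ℝ := ∏ v ∈ S, x v

def evalP (g : Finset V → ℝ) (x : V → ℝ) : ℝ := ∑ S : Finset V, g S * chi x S

def Wt (g : Finset V → ℝ) : ℝ := ∑ S ∈ Finset.univ.filter (fun S : Finset V => S ≠ ∅), |g S|

def suppNE (g : Finset V → ℝ) : Finset (Finset V) :=
  Finset.univ.filter (fun S : Finset V => S ≠ ∅ ∧ g S ≠ 0)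

def xOf (ε : V → Bool) : V → ℝ := fun v => if ε v then 1 else -1

lemma xOf_pm (ε : V → Bool) (v : V) : xOf ε v = 1 ∨ xOf ε v = -1 := by
  unfold xOf; by_cases h : ε v <;> simp [h]

def flip2 (v₀ w₀ : V) (ε : V → Bool) : V → Bool :=
  Function.update (Function.update ε v₀ (!(ε v₀))) w₀ (!(ε w₀))

lemma flip2_apply (v₀ w₀ : V) (hvw : v₀ ≠ w₀) (ε : V → Bool) (v : V) :
    flip2 v₀ w₀ ε v = if v = v₀ ∨ v = w₀ then !(ε v) else ε v := by
  unfold flip2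
  by_cases h1 : v = w₀
  · subst h1; simp [Function.update]
  · by_cases h2 : v = v₀
    · subst h2; simp [Function.update, h1, hvw]
    · simp [Function.update, h1, h2]

lemma chi_flip2 (v₀ w₀ : V) (hvw : v₀ ≠ w₀) (ε : V → Bool) (T : Finset V) :
    chi (xOf (flip2 v₀ w₀ ε)) T
      = ((if v₀ ∈ T then (-1:ℝ) else 1) * (if w₀ ∈ T then (-1:ℝ) else 1)) * chi (xOf ε) T := by
  unfold chi
  have hpt : ∀ v ∈ T, xOf (flip2 v₀ w₀ ε) v
      = ((if v = v₀ then (-1:ℝ) else 1) * (if v = w₀ then (-1:ℝ) else 1)) * xOf ε v := by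
    intro v _
    simp only [xOf, flip2_apply v₀ w₀ hvw]
    rcases eq_or_ne v v₀ with h1 | h1
    · simp only [h1]
      by_cases h : ε v₀ <;> simp [h, hvw]
    · rcases eq_or_ne v w₀ with h2 | h2
      · simp only [h2]
        by_cases h : ε w₀ <;> simp [h, Ne.symm hvw]
      · simp [h1, h2]
  rw [Finset.prod_congr rfl hpt]
  rw [Finset.prod_mul_distrib, Finset.prod_mul_distrib]
  congr 1
  congr 1
  · exact Finset.prod_ite_eq' T v₀ (fun _ => (-1:ℝ))
  · exact Finset.prod_ite_eq' T w₀ (fun _ => (-1:ℝ))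

lemma flip2_invol (v₀ w₀ : V) (hvw : v₀ ≠ w₀) (ε : V → Bool) :
    flip2 v₀ w₀ (flip2 v₀ w₀ ε) = ε := by
  funext v
  rw [flip2_apply v₀ w₀ hvw, flip2_apply v₀ w₀ hvw]
  by_cases h : v = v₀ ∨ v = w₀ <;> simp [h]

lemma flip2_ne (v₀ w₀ : V) (hvw : v₀ ≠ w₀) (ε : V → Bool) : flip2 v₀ w₀ ε ≠ ε := by
  intro h
  have := congrFun h v₀
  rw [flip2_apply v₀ w₀ hvw] at this
  simp at this

lemma sum_chi_filter_eq_zero (S₀ R : Finset V) (σ : ℝ)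
    (hRS : R ⊆ S₀) (hR : R.Nonempty) (hRne : R ≠ S₀) :
    ∑ ε ∈ Finset.univ.filter (fun ε : V → Bool => chi (xOf ε) S₀ = σ),
      chi (xOf ε) R = 0 := by
  obtain ⟨v₀, hv₀⟩ := hR
  obtain ⟨w₀, hw₀S, hw₀R⟩ : ∃ w₀, w₀ ∈ S₀ ∧ w₀ ∉ R := by
    by_contra h
    push_neg at h
    exact hRne (Finset.Subset.antisymm hRS h)
  have hvw : v₀ ≠ w₀ := fun h => hw₀R (h ▸ hv₀)
  apply Finset.sum_involution (fun ε _ => flip2 v₀ w₀ ε)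
  · intro ε hε
    rw [chi_flip2 v₀ w₀ hvw, if_pos hv₀, if_neg hw₀R]
    ring
  · intro ε hε _
    exact flip2_ne v₀ w₀ hvw ε
  · intro ε hε
    simp only [Finset.mem_filter, Finset.mem_univ, true_and] at hε ⊢
    rw [chi_flip2 v₀ w₀ hvw, if_pos (hRS hv₀), if_pos hw₀S, hε]
    ring
  · intro ε hε
    exact flip2_invol v₀ w₀ hvw ε


lemma chi_one (x : V → ℝ) : chi x ∅ = 1 := by simp [chi]

lemma exists_signing_nonempty (S₀ : Finset V) (hS₀ : S₀.Nonempty) (σ : ℝ)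
    (hσ : σ = 1 ∨ σ = -1) :
    ∃ ε : V → Bool, chi (xOf ε) S₀ = σ := by
  rcases hσ with h | h
  · exact ⟨fun _ => true, by simp [chi, xOf, h]⟩
  · obtain ⟨v₀, hv₀⟩ := hS₀
    refine ⟨fun v => v ≠ v₀, ?_⟩
    rw [h]
    have : ∀ v ∈ S₀, xOf (fun v => decide (v ≠ v₀)) v = if v = v₀ then (-1:ℝ) else 1 := by
      intro v _
      by_cases hv : v = v₀ <;> simp [xOf, hv]
    rw [chi, Finset.prod_congr rfl this, Finset.prod_ite_eq' S₀ v₀ (fun _ => (-1:ℝ)),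
      if_pos hv₀]

lemma exists_good_signing (g : Finset V → ℝ) (S₀ : Finset V) (hS₀ : S₀.Nonempty) :
    ∃ ε : V → Bool, chi (xOf ε) S₀ * g S₀ = |g S₀| ∧
      g ∅ + |g S₀| ≤ ∑ R ∈ S₀.powerset, g R * chi (xOf ε) R := by
  set σ : ℝ := if 0 ≤ g S₀ then 1 else -1 with hσdef
  have hσ : σ = 1 ∨ σ = -1 := by unfold σ; split_ifs <;> simp
  have hσg : σ * g S₀ = |g S₀| := by
    unfold σ; split_ifs with h
    · rw [_root_.abs_of_nonneg h]; ring
    · rw [_root_.abs_of_neg (lt_of_not_ge h)]; ring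
  set E := Finset.univ.filter (fun ε : V → Bool => chi (xOf ε) S₀ = σ) with hE
  have hEne : E.Nonempty := by
    obtain ⟨ε, hε⟩ := exists_signing_nonempty S₀ hS₀ σ hσ
    exact ⟨ε, by simp [hE, hε]⟩
  have hsum : ∑ ε ∈ E, ∑ R ∈ S₀.powerset, g R * chi (xOf ε) R
      = E.card * (g ∅ + |g S₀|) := by
    rw [Finset.sum_comm]
    have key : ∀ R ∈ S₀.powerset, ∑ ε ∈ E, g R * chi (xOf ε) R
        = if R = ∅ then E.card * g ∅ else if R = S₀ then E.card * (σ * g S₀) else 0 := by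
      intro R hR
      rw [Finset.mem_powerset] at hR
      by_cases h0 : R = ∅
      · simp [h0, chi_one, Finset.sum_const, nsmul_eq_mul, mul_comm]
      · by_cases h1 : R = S₀
        · subst h1
          rw [if_neg h0, if_pos rfl]
          have : ∀ ε ∈ E, g R * chi (xOf ε) R = g R * σ := by
            intro ε hε
            rw [hE, Finset.mem_filter] at hε
            rw [hε.2]
          rw [Finset.sum_congr rfl this, Finset.sum_const, nsmul_eq_mul]
          ring
        · rw [if_neg h0, if_neg h1, ← Finset.mul_sum,
            sum_chi_filter_eq_zero S₀ R σ hR (Finset.nonempty_iff_ne_empty.mpr h0) h1,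
            mul_zero]
    rw [Finset.sum_congr rfl key]
    have hpair : ({∅, S₀} : Finset (Finset V)) ⊆ S₀.powerset := by
      intro R hR
      simp only [Finset.mem_insert, Finset.mem_singleton] at hR
      rcases hR with h | h <;> simp [h]
    rw [← Finset.sum_subset hpair]
    · have hne : (∅ : Finset V) ≠ S₀ := fun h => by
        exact absurd h.symm (Finset.nonempty_iff_ne_empty.mp hS₀)
      rw [Finset.sum_pair hne]
      rw [if_pos rfl, if_neg (Ne.symm hne), if_pos rfl, hσg]
      ring
    · intro R _ hR
      simp only [Finset.mem_insert, Finset.mem_singleton] at hR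
      push_neg at hR
      rw [if_neg hR.1.ne_empty, if_neg hR.2]
  have hconst : ∑ _ε ∈ E, (g ∅ + |g S₀|) ≤ ∑ ε ∈ E, ∑ R ∈ S₀.powerset, g R * chi (xOf ε) R := by
    rw [hsum, Finset.sum_const, nsmul_eq_mul]
  obtain ⟨ε, hεE, hεle⟩ := Finset.exists_le_of_sum_le hEne hconst
  rw [hE, Finset.mem_filter] at hεE
  exact ⟨ε, by rw [hεE.2]; exact hσg, hεle⟩

lemma sdiff_union_inter_eq {U R S₀ : Finset V} (hU : U ∩ S₀ = ∅) (hR : R ⊆ S₀) :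
    (U ∪ R) \ S₀ = U ∧ (U ∪ R) ∩ S₀ = R ∧ Disjoint U R := by
  have hUS : ∀ v ∈ U, v ∉ S₀ := by
    intro v hv hvS
    exact absurd (Finset.mem_inter.mpr ⟨hv, hvS⟩) (by simp [hU])
  refine ⟨?_, ?_, ?_⟩
  · ext v
    simp only [Finset.mem_sdiff, Finset.mem_union]
    constructor
    · rintro ⟨h | h, hs⟩
      · exact h
      · exact absurd (hR h) hs
    · intro h
      exact ⟨Or.inl h, hUS v h⟩
  · ext v
    simp only [Finset.mem_inter, Finset.mem_union]
    constructor
    · rintro ⟨h | h, hs⟩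
      · exact absurd hs (hUS v h)
      · exact h
    · intro h
      exact ⟨Or.inr h, hR h⟩
  · rw [Finset.disjoint_left]
    intro v hv hvR
    exact hUS v hv (hR hvR)

def restrict (g : Finset V → ℝ) (S₀ : Finset V) (y : V → ℝ) : Finset V → ℝ :=
  fun U => if U ∩ S₀ = ∅ then ∑ R ∈ S₀.powerset, g (U ∪ R) * chi y R else 0

lemma restrict_empty (g : Finset V → ℝ) (S₀ : Finset V) (y : V → ℝ) :
    restrict g S₀ y ∅ = ∑ R ∈ S₀.powerset, g R * chi y R := by
  rw [restrict, if_pos (by simp)]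
  exact Finset.sum_congr rfl (fun R _ => by rw [Finset.empty_union])

lemma restrict_ne_zero {g : Finset V → ℝ} {S₀ : Finset V} {y : V → ℝ} {U : Finset V}
    (hU : restrict g S₀ y U ≠ 0) (hUne : U ≠ ∅) :
    U ∩ S₀ = ∅ ∧ ∃ T, g T ≠ 0 ∧ T ≠ S₀ ∧ T \ S₀ = U := by
  rw [restrict] at hU
  by_cases h : U ∩ S₀ = ∅
  · rw [if_pos h] at hU
    refine ⟨h, ?_⟩
    by_contra hc
    push_neg at hc
    apply hU
    apply Finset.sum_eq_zero
    intro R hR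
    rw [Finset.mem_powerset] at hR
    obtain ⟨hd, _, _⟩ := sdiff_union_inter_eq h hR
    by_cases hg : g (U ∪ R) = 0
    · rw [hg, zero_mul]
    · exact absurd hd (by
        intro hdd
        exact (hc (U ∪ R) hg (by
          intro he
          rw [he] at hdd
          simp only [Finset.sdiff_self] at hdd
          exact hUne hdd.symm)) hdd)
  · rw [if_neg h] at hU
    exact absurd rfl hU

lemma evalP_restrict (g : Finset V → ℝ) (S₀ : Finset V) (y x : V → ℝ) :
    evalP (restrict g S₀ y) x
      = evalP g (fun v => if v ∈ S₀ then y v else x v) := by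
  set z : V → ℝ := fun v => if v ∈ S₀ then y v else x v with hz
  rw [evalP, evalP]
  have step1 : ∑ U : Finset V, restrict g S₀ y U * chi x U
      = ∑ U ∈ Finset.univ.filter (fun U : Finset V => U ∩ S₀ = ∅),
          ∑ R ∈ S₀.powerset, g (U ∪ R) * chi y R * chi x U := by
    rw [Finset.sum_filter]
    apply Finset.sum_congr rfl
    intro U _
    rw [restrict]
    by_cases h : U ∩ S₀ = ∅
    · rw [if_pos h, if_pos h, Finset.sum_mul]
    · rw [if_neg h, if_neg h, zero_mul]
  rw [step1, ← Finset.sum_product']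
  apply Finset.sum_nbij' (i := fun p : Finset V × Finset V => p.1 ∪ p.2)
    (j := fun T => (T \ S₀, T ∩ S₀))
  · intro p _
    exact Finset.mem_univ _
  · intro T _
    simp only [Finset.mem_product, Finset.mem_filter, Finset.mem_univ, true_and,
      Finset.mem_powerset]
    exact ⟨Finset.sdiff_inter_self S₀ T, Finset.inter_subset_right⟩
  · intro p hp
    simp only [Finset.mem_product, Finset.mem_filter, Finset.mem_univ, true_and,
      Finset.mem_powerset] at hp
    obtain ⟨h1, h2, _⟩ := sdiff_union_inter_eq hp.1 hp.2
    simp [h1, h2]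
  · intro T _
    ext v
    simp only [Finset.mem_union, Finset.mem_sdiff, Finset.mem_inter]
    tauto
  · intro p hp
    simp only [Finset.mem_product, Finset.mem_filter, Finset.mem_univ, true_and,
      Finset.mem_powerset] at hp
    obtain ⟨-, -, hdisj⟩ := sdiff_union_inter_eq hp.1 hp.2
    have hyR : ∏ v ∈ p.2, z v = chi y p.2 := by
      rw [chi]
      apply Finset.prod_congr rfl
      intro v hv
      rw [hz]
      simp only [if_pos (hp.2 hv)]
    have hxU : ∏ v ∈ p.1, z v = chi x p.1 := by
      rw [chi]
      apply Finset.prod_congr rfl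
      intro v hv
      have : v ∉ S₀ := by
        intro hvS
        exact absurd (Finset.mem_inter.mpr ⟨hv, hvS⟩) (by simp [hp.1])
      rw [hz]
      simp only [if_neg this]
    have key : chi z (p.1 ∪ p.2) = chi x p.1 * chi y p.2 := by
      rw [chi, Finset.prod_union hdisj, hxU, hyR]
    rw [key]
    ring

lemma abs_chi_eq_one {y : V → ℝ} (hy : ∀ v, y v = 1 ∨ y v = -1) (R : Finset V) :
    |chi y R| = 1 := by
  rw [chi, Finset.abs_prod]
  apply Finset.prod_eq_one
  intro v _
  rcases hy v with h | h <;> rw [h] <;> norm_num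

variable {d ℓ : ℕ}

lemma card_inter_le (g : Finset V → ℝ) (S₀ : Finset V)
    (hdeg : S₀.card ≤ d)
    (hell : ∀ v, (Finset.univ.filter (fun S : Finset V => g S ≠ 0 ∧ v ∈ S)).card ≤ ℓ) :
    (Finset.univ.filter (fun T : Finset V => g T ≠ 0 ∧ T ∩ S₀ ≠ ∅)).card ≤ d * ℓ := by
  have hsub : (Finset.univ.filter (fun T : Finset V => g T ≠ 0 ∧ T ∩ S₀ ≠ ∅))
      ⊆ S₀.biUnion (fun v => Finset.univ.filter (fun T : Finset V => g T ≠ 0 ∧ v ∈ T)) := by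
    intro T hT
    simp only [Finset.mem_filter, Finset.mem_univ, true_and] at hT
    obtain ⟨v, hv⟩ := Finset.nonempty_iff_ne_empty.mpr hT.2
    rw [Finset.mem_inter] at hv
    exact Finset.mem_biUnion.mpr ⟨v, hv.2, by simp [hT.1, hv.1]⟩
  calc (Finset.univ.filter (fun T : Finset V => g T ≠ 0 ∧ T ∩ S₀ ≠ ∅)).card
      ≤ (S₀.biUnion (fun v => Finset.univ.filter
          (fun T : Finset V => g T ≠ 0 ∧ v ∈ T))).card := Finset.card_le_card hsub
    _ ≤ ∑ v ∈ S₀, (Finset.univ.filter (fun T : Finset V => g T ≠ 0 ∧ v ∈ T)).card :=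
        Finset.card_biUnion_le
    _ ≤ ∑ _v ∈ S₀, ℓ := Finset.sum_le_sum (fun v _ => hell v)
    _ = S₀.card * ℓ := by rw [Finset.sum_const, smul_eq_mul]
    _ ≤ d * ℓ := Nat.mul_le_mul_right ℓ hdeg

lemma sum_abs_le_aux (g : Finset V → ℝ) (S₀ : Finset V)
    (hS₀ : S₀ ∈ suppNE g)
    (hmax : ∀ T ∈ suppNE g, |g T| ≤ |g S₀|)
    (hdeg : S₀.card ≤ d)
    (hell : ∀ v, (Finset.univ.filter (fun S : Finset V => g S ≠ 0 ∧ v ∈ S)).card ≤ ℓ)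
    (D : Finset (Finset V))
    (hD : ∀ T ∈ D, g T ≠ 0 ∧ T ∩ S₀ ≠ ∅ ∧ T ≠ S₀) :
    ∑ T ∈ D, |g T| ≤ ((d:ℝ) * ℓ - 1) * |g S₀| := by
  simp only [suppNE, Finset.mem_filter, Finset.mem_univ, true_and] at hS₀
  set C := Finset.univ.filter (fun T : Finset V => g T ≠ 0 ∧ T ∩ S₀ ≠ ∅) with hC
  have hS₀C : S₀ ∈ C := by
    simp only [hC, Finset.mem_filter, Finset.mem_univ, true_and]
    refine ⟨hS₀.2, ?_⟩
    rw [Finset.inter_self]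
    exact hS₀.1
  have hDC : D ⊆ C.erase S₀ := by
    intro T hT
    obtain ⟨h1, h2, h3⟩ := hD T hT
    rw [Finset.mem_erase]
    exact ⟨h3, by simp [hC, h1, h2]⟩
  have hCcard : C.card ≤ d * ℓ := card_inter_le g S₀ hdeg hell
  have hcard : (C.erase S₀).card ≤ d * ℓ - 1 := by
    rw [Finset.card_erase_of_mem hS₀C]
    omega
  have h1le : 1 ≤ d * ℓ := le_trans (Finset.card_pos.mpr ⟨S₀, hS₀C⟩) hCcard
  calc ∑ T ∈ D, |g T| ≤ ∑ T ∈ C.erase S₀, |g T| :=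
        Finset.sum_le_sum_of_subset_of_nonneg hDC (fun _ _ _ => abs_nonneg _)
    _ ≤ (C.erase S₀).card • |g S₀| := by
        apply Finset.sum_le_card_nsmul
        intro T hT
        rw [Finset.mem_erase, hC, Finset.mem_filter] at hT
        apply hmax
        simp only [suppNE, Finset.mem_filter, Finset.mem_univ, true_and]
        refine ⟨?_, hT.2.2.1⟩
        intro he
        rw [he] at hT
        simp at hT
    _ = ((C.erase S₀).card : ℝ) * |g S₀| := by rw [nsmul_eq_mul]
    _ ≤ ((d:ℝ) * ℓ - 1) * |g S₀| := by
        apply mul_le_mul_of_nonneg_right _ (abs_nonneg _)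
        have : ((C.erase S₀).card : ℝ) ≤ ((d * ℓ - 1 : ℕ) : ℝ) := Nat.cast_le.mpr hcard
        apply le_trans this
        rw [Nat.cast_sub h1le]
        push_cast
        ring_nf
        exact le_refl _

lemma Wt_restrict_le (g : Finset V → ℝ) (S₀ : Finset V) (y : V → ℝ)
    (hS₀ : S₀ ∈ suppNE g)
    (hmax : ∀ T ∈ suppNE g, |g T| ≤ |g S₀|)
    (hdeg : S₀.card ≤ d)
    (hell : ∀ v, (Finset.univ.filter (fun S : Finset V => g S ≠ 0 ∧ v ∈ S)).card ≤ ℓ)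
    (hy : ∀ v, y v = 1 ∨ y v = -1) :
    Wt g ≤ Wt (restrict g S₀ y) + (2 * (d:ℝ) * ℓ - 1) * |g S₀| := by
  have hS₀' := hS₀
  simp only [suppNE, Finset.mem_filter, Finset.mem_univ, true_and] at hS₀'
  -- split Wt g
  rw [Wt, ← Finset.sum_filter_add_sum_filter_not
    (Finset.univ.filter (fun S : Finset V => S ≠ ∅)) (fun T => T ∩ S₀ = ∅) (fun T => |g T|)]
  set G1 := (Finset.univ.filter (fun S : Finset V => S ≠ ∅)).filter (fun T => T ∩ S₀ = ∅)
    with hG1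
  set G2 := (Finset.univ.filter (fun S : Finset V => S ≠ ∅)).filter (fun T => ¬ T ∩ S₀ = ∅)
    with hG2
  -- bound for G2
  have hB2 : ∑ T ∈ G2, |g T| ≤ |g S₀| + ((d:ℝ) * ℓ - 1) * |g S₀| := by
    have : ∑ T ∈ G2, |g T| = ∑ T ∈ G2.filter (fun T => g T ≠ 0), |g T| := by
      symm
      apply Finset.sum_filter_of_ne
      intro T _ hne hgz
      exact hne (by rw [hgz, abs_zero])
    rw [this]
    by_cases hmem : S₀ ∈ G2.filter (fun T => g T ≠ 0)
    · rw [← Finset.sum_erase_add _ _ hmem]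
      have := sum_abs_le_aux g S₀ hS₀ hmax hdeg hell
        ((G2.filter (fun T => g T ≠ 0)).erase S₀) (by
          intro T hT
          rw [Finset.mem_erase, Finset.mem_filter, hG2, Finset.mem_filter] at hT
          exact ⟨hT.2.2, hT.2.1.2, hT.1⟩)
      linarith
    · have := sum_abs_le_aux g S₀ hS₀ hmax hdeg hell
        (G2.filter (fun T => g T ≠ 0)) (by
          intro T hT
          rw [Finset.mem_filter, hG2, Finset.mem_filter] at hT
          refine ⟨hT.2, hT.1.2, ?_⟩
          intro he
          rw [he] at hT
          exact hmem (by rw [Finset.mem_filter, hG2, Finset.mem_filter]; exact hT))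
      have habs : (0:ℝ) ≤ |g S₀| := abs_nonneg _
      linarith
  -- bound for G1
  have hB1 : ∑ T ∈ G1, |g T| ≤ Wt (restrict g S₀ y) + ((d:ℝ) * ℓ - 1) * |g S₀| := by
    have hstep : ∀ T ∈ G1, |g T| ≤ |restrict g S₀ y T|
        + ∑ R ∈ S₀.powerset.erase ∅, |g (T ∪ R)| := by
      intro T hT
      rw [hG1, Finset.mem_filter, Finset.mem_filter] at hT
      obtain ⟨⟨-, hTne⟩, hTS⟩ := hT
      have hres : restrict g S₀ y T = g T + ∑ R ∈ S₀.powerset.erase ∅, g (T ∪ R) * chi y R := by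
        rw [restrict, if_pos hTS]
        rw [← Finset.sum_erase_add _ _ (Finset.mem_powerset.mpr (Finset.empty_subset S₀))]
        rw [Finset.union_empty, chi_one, mul_one]
        ring
      have : g T = restrict g S₀ y T - ∑ R ∈ S₀.powerset.erase ∅, g (T ∪ R) * chi y R := by
        rw [hres]; ring
      rw [this]
      refine le_trans (abs_sub _ _) ?_
      gcongr
      refine le_trans (Finset.abs_sum_le_sum_abs _ _) ?_
      apply Finset.sum_le_sum
      intro R _
      rw [abs_mul, abs_chi_eq_one hy, mul_one]
    calc ∑ T ∈ G1, |g T|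
        ≤ ∑ T ∈ G1, (|restrict g S₀ y T| + ∑ R ∈ S₀.powerset.erase ∅, |g (T ∪ R)|) :=
          Finset.sum_le_sum hstep
      _ = ∑ T ∈ G1, |restrict g S₀ y T| + ∑ T ∈ G1, ∑ R ∈ S₀.powerset.erase ∅, |g (T ∪ R)| :=
          Finset.sum_add_distrib
      _ ≤ Wt (restrict g S₀ y) + ((d:ℝ) * ℓ - 1) * |g S₀| := by
          gcongr
          · rw [Wt]
            apply Finset.sum_le_sum_of_subset_of_nonneg
            · intro T hT
              rw [hG1, Finset.mem_filter] at hT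
              exact hT.1
            · intro _ _ _
              exact abs_nonneg _
          · -- pairs bound
            rw [← Finset.sum_product']
            set P := G1 ×ˢ (S₀.powerset.erase ∅) with hP
            have hinj : ∀ p ∈ P, ∀ q ∈ P, p.1 ∪ p.2 = q.1 ∪ q.2 → p = q := by
              intro p hp q hq hpq
              rw [hP, Finset.mem_product, hG1, Finset.mem_filter, Finset.mem_filter,
                Finset.mem_erase, Finset.mem_powerset] at hp hq
              obtain ⟨h1, _, h2⟩ := sdiff_union_inter_eq hp.1.2 hp.2.2
              obtain ⟨h1', _, h2'⟩ := sdiff_union_inter_eq hq.1.2 hq.2.2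
              have e1 : p.1 = q.1 := by rw [← h1, ← h1', hpq]
              have e2 : p.2 = q.2 := by
                have := congrArg (fun s => s ∩ S₀) hpq
                simpa [(sdiff_union_inter_eq hp.1.2 hp.2.2).2.1,
                  (sdiff_union_inter_eq hq.1.2 hq.2.2).2.1] using this
              exact Prod.ext e1 e2
            have himg : ∑ p ∈ P, |g (p.1 ∪ p.2)|
                = ∑ T ∈ P.image (fun p : Finset V × Finset V => p.1 ∪ p.2), |g T| := by
              rw [Finset.sum_image hinj]
            rw [himg]
            have : ∑ T ∈ P.image (fun p : Finset V × Finset V => p.1 ∪ p.2), |g T|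
                = ∑ T ∈ (P.image (fun p : Finset V × Finset V => p.1 ∪ p.2)).filter
                    (fun T => g T ≠ 0), |g T| := by
              symm
              apply Finset.sum_filter_of_ne
              intro T _ hne hgz
              exact hne (by rw [hgz, abs_zero])
            rw [this]
            apply sum_abs_le_aux g S₀ hS₀ hmax hdeg hell
            intro T hT
            rw [Finset.mem_filter, Finset.mem_image] at hT
            obtain ⟨⟨p, hp, hpT⟩, hgT⟩ := hT
            rw [hP, Finset.mem_product, hG1, Finset.mem_filter, Finset.mem_filter,
              Finset.mem_erase, Finset.mem_powerset] at hp
            obtain ⟨hd1, hd2, -⟩ := sdiff_union_inter_eq hp.1.2 hp.2.2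
            refine ⟨hgT, ?_, ?_⟩
            · rw [← hpT, hd2]
              intro he
              exact hp.2.1 he
            · intro he
              have : T \ S₀ = p.1 := by rw [← hpT, hd1]
              rw [he] at this
              simp only [Finset.sdiff_self] at this
              exact hp.1.1.2 this.symm
  linarith

lemma suppNE_restrict_card {g : Finset V → ℝ} {S₀ : Finset V} {y : V → ℝ}
    (hS₀ : S₀ ∈ suppNE g) :
    (suppNE (restrict g S₀ y)).card < (suppNE g).card := by
  have hsub : suppNE (restrict g S₀ y) ⊆ ((suppNE g).erase S₀).image (fun T => T \ S₀) := by
    intro U hU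
    simp only [suppNE, Finset.mem_filter, Finset.mem_univ, true_and] at hU
    obtain ⟨hUne, hUnz⟩ := hU
    obtain ⟨-, T, hT1, hT2, hT3⟩ := restrict_ne_zero hUnz hUne
    rw [Finset.mem_image]
    refine ⟨T, ?_, hT3⟩
    rw [Finset.mem_erase]
    refine ⟨hT2, ?_⟩
    simp only [suppNE, Finset.mem_filter, Finset.mem_univ, true_and]
    refine ⟨?_, hT1⟩
    intro he
    rw [he] at hT3
    simp only [Finset.empty_sdiff] at hT3
    exact hUne hT3.symm
  calc (suppNE (restrict g S₀ y)).card
      ≤ (((suppNE g).erase S₀).image (fun T => T \ S₀)).card := Finset.card_le_card hsub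
    _ ≤ ((suppNE g).erase S₀).card := Finset.card_image_le
    _ < (suppNE g).card := Finset.card_erase_lt_of_mem hS₀

lemma restrict_deg {g : Finset V → ℝ} {S₀ : Finset V} {y : V → ℝ}
    (hdeg : ∀ S, g S ≠ 0 → S.card ≤ d) :
    ∀ S, restrict g S₀ y S ≠ 0 → S.card ≤ d := by
  intro S hS
  by_cases hne : S = ∅
  · rw [hne]
    simp only [Finset.card_empty]
    exact Nat.zero_le d
  · obtain ⟨-, T, hT1, -, hT3⟩ := restrict_ne_zero hS hne
    rw [← hT3]
    exact le_trans (Finset.card_le_card (Finset.sdiff_subset)) (hdeg T hT1)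

lemma restrict_ell {g : Finset V → ℝ} {S₀ : Finset V} {y : V → ℝ}
    (hell : ∀ v, (Finset.univ.filter (fun S : Finset V => g S ≠ 0 ∧ v ∈ S)).card ≤ ℓ) :
    ∀ v, (Finset.univ.filter
        (fun S : Finset V => restrict g S₀ y S ≠ 0 ∧ v ∈ S)).card ≤ ℓ := by
  intro v
  have hsub : Finset.univ.filter (fun S : Finset V => restrict g S₀ y S ≠ 0 ∧ v ∈ S)
      ⊆ (Finset.univ.filter (fun S : Finset V => g S ≠ 0 ∧ v ∈ S)).image
          (fun T => T \ S₀) := by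
    intro U hU
    simp only [Finset.mem_filter, Finset.mem_univ, true_and] at hU
    have hUne : U ≠ ∅ := by
      intro he
      rw [he] at hU
      exact absurd hU.2 (Finset.notMem_empty v)
    obtain ⟨-, T, hT1, -, hT3⟩ := restrict_ne_zero hU.1 hUne
    rw [Finset.mem_image]
    refine ⟨T, ?_, hT3⟩
    simp only [Finset.mem_filter, Finset.mem_univ, true_and]
    refine ⟨hT1, ?_⟩
    have : v ∈ T \ S₀ := hT3.symm ▸ hU.2
    exact (Finset.mem_sdiff.mp this).1
  calc _ ≤ ((Finset.univ.filter (fun S : Finset V => g S ≠ 0 ∧ v ∈ S)).image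
          (fun T => T \ S₀)).card := Finset.card_le_card hsub
    _ ≤ (Finset.univ.filter (fun S : Finset V => g S ≠ 0 ∧ v ∈ S)).card :=
        Finset.card_image_le
    _ ≤ ℓ := hell v

lemma evalP_of_suppNE_empty {g : Finset V → ℝ} (hs : suppNE g = ∅) (x : V → ℝ) :
    evalP g x = g ∅ := by
  have hz : ∀ S : Finset V, S ≠ ∅ → g S = 0 := by
    intro S hS
    by_contra hgz
    have : S ∈ suppNE g := by
      simp only [suppNE, Finset.mem_filter, Finset.mem_univ, true_and]
      exact ⟨hS, hgz⟩
    rw [hs] at this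
    exact Finset.notMem_empty S this
  rw [evalP]
  rw [Finset.sum_eq_single_of_mem ∅ (Finset.mem_univ _)]
  · rw [chi_one, mul_one]
  · intro S _ hS
    rw [hz S hS, zero_mul]

lemma Wt_of_suppNE_empty {g : Finset V → ℝ} (hs : suppNE g = ∅) : Wt g = 0 := by
  rw [Wt]
  apply Finset.sum_eq_zero
  intro S hS
  rw [Finset.mem_filter] at hS
  by_contra hgz
  have : S ∈ suppNE g := by
    simp only [suppNE, Finset.mem_filter, Finset.mem_univ, true_and]
    exact ⟨hS.2, fun h => hgz (by rw [h, abs_zero])⟩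
  rw [hs] at this
  exact Finset.notMem_empty S this

theorem main_comb (d ℓ : ℕ) :
    ∀ (N : ℕ) (g : Finset V → ℝ), (suppNE g).card ≤ N →
    (∀ S, g S ≠ 0 → S.card ≤ d) →
    (∀ v, (Finset.univ.filter (fun S : Finset V => g S ≠ 0 ∧ v ∈ S)).card ≤ ℓ) →
    ∃ x : V → ℝ, (∀ v, x v = 1 ∨ x v = -1) ∧
      Wt g ≤ 2 * (d:ℝ) * ℓ * (evalP g x - g ∅) := by
  intro N
  induction N with
  | zero =>
    intro g hcard _ _
    have hs : suppNE g = ∅ := Finset.card_eq_zero.mp (Nat.le_zero.mp hcard)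
    refine ⟨fun _ => 1, fun v => Or.inl rfl, ?_⟩
    rw [Wt_of_suppNE_empty hs, evalP_of_suppNE_empty hs]
    simp
  | succ N ih =>
    intro g hcard hdeg hell
    by_cases hs : suppNE g = ∅
    · refine ⟨fun _ => 1, fun v => Or.inl rfl, ?_⟩
      rw [Wt_of_suppNE_empty hs, evalP_of_suppNE_empty hs]
      simp
    · obtain ⟨S₀, hS₀mem, hS₀max⟩ := Finset.exists_max_image (suppNE g) (fun T => |g T|)
        (Finset.nonempty_iff_ne_empty.mpr hs)
      have hS₀' := hS₀mem
      simp only [suppNE, Finset.mem_filter, Finset.mem_univ, true_and] at hS₀'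
      have hS₀ne : S₀.Nonempty := Finset.nonempty_iff_ne_empty.mpr hS₀'.1
      have hd1 : 1 ≤ d := le_trans (Finset.card_pos.mpr hS₀ne) (hdeg S₀ hS₀'.2)
      have hl1 : 1 ≤ ℓ := by
        obtain ⟨v, hv⟩ := hS₀ne
        refine le_trans ?_ (hell v)
        rw [Nat.one_le_iff_ne_zero, ← Nat.pos_iff_ne_zero, Finset.card_pos]
        exact ⟨S₀, by simp [hS₀'.2, hv]⟩
      obtain ⟨ε, hεσ, hεge⟩ := exists_good_signing g S₀ hS₀ne
      set y := xOf ε with hy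
      set g' := restrict g S₀ y with hg'
      have hcard' : (suppNE g').card ≤ N := by
        have h := suppNE_restrict_card (g := g) (S₀ := S₀) (y := y) hS₀mem
        rw [← hg'] at h
        omega
      obtain ⟨x', hx'pm, hx'⟩ := ih g' hcard' (restrict_deg hdeg) (restrict_ell hell)
      set x : V → ℝ := fun v => if v ∈ S₀ then y v else x' v with hx
      have hxpm : ∀ v, x v = 1 ∨ x v = -1 := by
        intro v
        rw [hx]
        by_cases h : v ∈ S₀
        · simp only [if_pos h]
          exact xOf_pm ε v
        · simp only [if_neg h]
          exact hx'pm v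
      refine ⟨x, hxpm, ?_⟩
      have heval : evalP g' x' = evalP g x := evalP_restrict g S₀ y x'
      have hWt : Wt g ≤ Wt g' + (2 * (d:ℝ) * ℓ - 1) * |g S₀| :=
        Wt_restrict_le g S₀ y hS₀mem hS₀max (hdeg S₀ hS₀'.2) hell (xOf_pm ε)
      have hg'empty : g ∅ + |g S₀| ≤ g' ∅ := by
        rw [hg', restrict_empty]
        exact hεge
      have hD1 : (1:ℝ) ≤ 2 * (d:ℝ) * ℓ := by
        have : (1:ℝ) ≤ (d:ℝ) := by exact_mod_cast hd1
        have h2 : (1:ℝ) ≤ (ℓ:ℝ) := by exact_mod_cast hl1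
        nlinarith
      have habs : (0:ℝ) ≤ |g S₀| := abs_nonneg _
      have hkey : 2 * (d:ℝ) * ℓ * (evalP g' x' - g' ∅)
          ≤ 2 * (d:ℝ) * ℓ * (evalP g x - g ∅ - |g S₀|) := by
        apply mul_le_mul_of_nonneg_left _ (by linarith)
        rw [← heval]
        linarith
      calc Wt g ≤ Wt g' + (2 * (d:ℝ) * ℓ - 1) * |g S₀| := hWt
        _ ≤ 2 * (d:ℝ) * ℓ * (evalP g' x' - g' ∅) + (2 * (d:ℝ) * ℓ - 1) * |g S₀| := by
            linarith
        _ ≤ 2 * (d:ℝ) * ℓ * (evalP g x - g ∅ - |g S₀|)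
            + (2 * (d:ℝ) * ℓ - 1) * |g S₀| := by linarith
        _ = 2 * (d:ℝ) * ℓ * (evalP g x - g ∅) - |g S₀| := by ring
        _ ≤ 2 * (d:ℝ) * ℓ * (evalP g x - g ∅) := by linarith
end Comb

def expVal1 (M : Matrix (Fin 2) (Fin 2) ℂ) (φ : Fin 2 → ℂ) : ℂ :=
  ∑ v, ∑ w, (starRingEnd ℂ) (φ v) * M v w * φ w

lemma expVal1_entries (M : Matrix (Fin 2) (Fin 2) ℂ) (u v : ℂ) :
    expVal1 M ![u, v] = (starRingEnd ℂ) u * M 0 0 * u + (starRingEnd ℂ) u * M 0 1 * v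
      + (starRingEnd ℂ) v * M 1 0 * u + (starRingEnd ℂ) v * M 1 1 * v := by
  simp [expVal1, Fin.sum_univ_two]
  ring

-- constants
namespace TetraFacts
def A : ℝ := Real.sqrt (3 + Real.sqrt 3)
def B : ℝ := Real.sqrt (3 - Real.sqrt 3)
def C : ℝ := Real.sqrt 6

lemma s3_nonneg : (0:ℝ) ≤ Real.sqrt 3 := Real.sqrt_nonneg 3
lemma s3_sq : Real.sqrt 3 ^ 2 = 3 := Real.sq_sqrt (by norm_num)
lemma s3_lt : Real.sqrt 3 < 3 := by nlinarith [s3_sq, s3_nonneg]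
lemma A_nonneg : 0 ≤ A := Real.sqrt_nonneg _
lemma B_nonneg : 0 ≤ B := Real.sqrt_nonneg _
lemma C_pos : 0 < C := Real.sqrt_pos.mpr (by norm_num)
lemma A_sq : A ^ 2 = 3 + Real.sqrt 3 := Real.sq_sqrt (by nlinarith [s3_nonneg])
lemma B_sq : B ^ 2 = 3 - Real.sqrt 3 := Real.sq_sqrt (by nlinarith [s3_lt])
lemma C_sq : C ^ 2 = 6 := Real.sq_sqrt (by norm_num)
lemma AB_eq : A * B = C := by
  rw [A, B, C, ← Real.sqrt_mul (by nlinarith [s3_nonneg])]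
  congr 1
  nlinarith [s3_sq]
lemma s2_sq : Real.sqrt 2 ^ 2 = 2 := Real.sq_sqrt (by norm_num)
lemma s2_nonneg : (0:ℝ) ≤ Real.sqrt 2 := Real.sqrt_nonneg 2
lemma sqrt3_ne : Real.sqrt 3 ≠ 0 := by positivity
-- key product identities
lemma s2s3 : Real.sqrt 2 * Real.sqrt 3 = C := by
  rw [C, ← Real.sqrt_mul (by norm_num)]
  norm_num

lemma omega_eq : Complex.exp (Real.pi * I / 4)
    = ((Real.sqrt 2 / 2 : ℝ) : ℂ) + ((Real.sqrt 2 / 2 : ℝ) : ℂ) * I := by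
  have h : (Real.pi : ℂ) * I / 4 = ((Real.pi / 4 : ℝ) : ℂ) * I := by
    push_cast; ring
  rw [h, Complex.exp_mul_I, ← Complex.ofReal_cos, ← Complex.ofReal_sin,
    Real.cos_pi_div_four, Real.sin_pi_div_four]


lemma pq_id : ((3+Real.sqrt 3)/6) + ((3-Real.sqrt 3)/6) = 1 := by ring

lemma pq_diff : ((3+Real.sqrt 3)/6) - ((3-Real.sqrt 3)/6) = (Real.sqrt 3)⁻¹ := by
  have h := s3_sq
  have h0 : Real.sqrt 3 ≠ 0 := sqrt3_ne
  field_simp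
  nlinarith [h]

lemma two_s : 2 * (1/(2*Real.sqrt 3)) = (Real.sqrt 3)⁻¹ := by
  have h0 : Real.sqrt 3 ≠ 0 := sqrt3_ne
  field_simp

lemma coeff_id : A * (Real.sqrt 2/2) * B / (C*C) = 1/(2*Real.sqrt 3) := by
  have hCne : C ≠ 0 := ne_of_gt C_pos
  have h1 : A * Real.sqrt 2 * B * Real.sqrt 3 = C^2 := by
    calc A * Real.sqrt 2 * B * Real.sqrt 3 = (A*B) * (Real.sqrt 2 * Real.sqrt 3) := by ring
      _ = C * C := by rw [AB_eq, s2s3]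
      _ = C^2 := by ring
  have h0 : Real.sqrt 3 ≠ 0 := sqrt3_ne
  field_simp
  linarith [h1]

end TetraFacts

open TetraFacts

lemma eP0 (u v : ℂ) : expVal1 (pauli 0) ![u,v]
    = (starRingEnd ℂ) u * u + (starRingEnd ℂ) v * v := by
  show expVal1 1 _ = _
  rw [expVal1_entries]
  simp [Matrix.one_apply]

lemma eP1 (u v : ℂ) : expVal1 (pauli 1) ![u,v]
    = (starRingEnd ℂ) u * v + (starRingEnd ℂ) v * u := by
  show expVal1 σX _ = _
  rw [expVal1_entries]
  simp [σX]
  try ring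

lemma eP2 (u v : ℂ) : expVal1 (pauli 2) ![u,v]
    = -I * ((starRingEnd ℂ) u * v) + I * ((starRingEnd ℂ) v * u) := by
  show expVal1 σY _ = _
  rw [expVal1_entries]
  simp [σY]
  try ring

lemma eP3 (u v : ℂ) : expVal1 (pauli 3) ![u,v]
    = (starRingEnd ℂ) u * u - (starRingEnd ℂ) v * v := by
  show expVal1 σZ _ = _
  rw [expVal1_entries]
  simp [σZ]
  try ring

/-- master evaluation from the three inner products -/
lemma expVal1_of_uv (u v : ℂ) (p q s t : ℝ)
    (huu : (starRingEnd ℂ) u * u = (p:ℂ))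
    (hvv : (starRingEnd ℂ) v * v = (q:ℂ))
    (huv : (starRingEnd ℂ) u * v = (s:ℂ) * (1 + (t:ℂ)*I)) :
    expVal1 (pauli 0) ![u,v] = ((p+q : ℝ):ℂ) ∧
    expVal1 (pauli 1) ![u,v] = ((2*s : ℝ):ℂ) ∧
    expVal1 (pauli 2) ![u,v] = ((2*s*t : ℝ):ℂ) ∧
    expVal1 (pauli 3) ![u,v] = ((p-q : ℝ):ℂ) := by
  have hvu : (starRingEnd ℂ) v * u = (s:ℂ) * (1 - (t:ℂ)*I) := by
    have h := congrArg (starRingEnd ℂ) huv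
    simp only [_root_.map_mul, _root_.map_add, _root_.map_one, Complex.conj_conj,
      Complex.conj_ofReal, Complex.conj_I] at h
    calc (starRingEnd ℂ) v * u = u * (starRingEnd ℂ) v := by ring
      _ = (s:ℂ) * (1 + (t:ℂ) * -I) := h
      _ = (s:ℂ) * (1 - (t:ℂ)*I) := by ring
  refine ⟨?_, ?_, ?_, ?_⟩
  · rw [eP0, huu, hvv]; push_cast; ring
  · rw [eP1, huv, hvu]; push_cast; ring
  · rw [eP2, huv, hvu]
    have hI := Complex.I_sq
    push_cast
    linear_combination (-2*(s:ℂ)*(t:ℂ)) * hI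
  · rw [eP3, huu, hvv]; push_cast; ring

def uA : ℂ := ((A : ℝ) : ℂ) / ((C : ℝ) : ℂ)
def vB : ℂ := (((Real.sqrt 2 / 2 : ℝ) : ℂ) + ((Real.sqrt 2 / 2 : ℝ) : ℂ) * I) * ((B:ℝ) : ℂ) / ((C:ℝ) : ℂ)

lemma hCne : ((C:ℝ):ℂ) ≠ 0 := by
  simp only [ne_eq, Complex.ofReal_eq_zero]
  exact ne_of_gt C_pos

lemma huu_A : (starRingEnd ℂ) uA * uA = (((3+Real.sqrt 3)/6 : ℝ) : ℂ) := by
  rw [uA]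
  simp only [map_div₀, Complex.conj_ofReal]
  rw [div_mul_div_comm]
  have h1 : ((A:ℝ):ℂ) * ((A:ℝ):ℂ) = (((3+Real.sqrt 3) : ℝ) : ℂ) := by
    push_cast
    norm_cast
    rw [show A * A = 3 + Real.sqrt 3 by nlinarith [A_sq]]
    simp
  have h2 : ((C:ℝ):ℂ) * ((C:ℝ):ℂ) = ((6 : ℝ) : ℂ) := by
    push_cast
    norm_cast
    rw [show C * C = 6 by nlinarith [C_sq]]
    simp
  rw [h1, h2]
  push_cast
  ring

lemma hvv_B : (starRingEnd ℂ) vB * vB = (((3-Real.sqrt 3)/6 : ℝ) : ℂ) := by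
  rw [vB]
  simp only [map_div₀, _root_.map_mul, _root_.map_add, Complex.conj_ofReal, Complex.conj_I]
  have hs2 : ((Real.sqrt 2 :ℝ):ℂ) * ((Real.sqrt 2:ℝ):ℂ) = (2:ℂ) := by
    norm_cast
    nlinarith [s2_sq]
  have h1 : ((((Real.sqrt 2/2:ℝ)):ℂ) + (((Real.sqrt 2/2:ℝ)):ℂ) * (-I))
      * ((((Real.sqrt 2/2:ℝ)):ℂ) + (((Real.sqrt 2/2:ℝ)):ℂ) * I) = 1 := by
    push_cast
    linear_combination ((1 - Complex.I^2)/4) * hs2 - (1/2) * Complex.I_sq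
  have hB2 : ((B:ℝ):ℂ) * ((B:ℝ):ℂ) = (((3-Real.sqrt 3) : ℝ) : ℂ) := by
    norm_cast
    nlinarith [B_sq]
  have h2 : ((C:ℝ):ℂ) * ((C:ℝ):ℂ) = ((6 : ℝ) : ℂ) := by
    norm_cast
    nlinarith [C_sq]
  calc ((((Real.sqrt 2/2:ℝ)):ℂ) + (((Real.sqrt 2/2:ℝ)):ℂ) * (-I)) * ((B:ℝ):ℂ) / ((C:ℝ):ℂ)
        * (((((Real.sqrt 2/2:ℝ)):ℂ) + (((Real.sqrt 2/2:ℝ)):ℂ) * I) * ((B:ℝ):ℂ) / ((C:ℝ):ℂ))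
      = (((((Real.sqrt 2/2:ℝ)):ℂ) + (((Real.sqrt 2/2:ℝ)):ℂ) * (-I))
          * ((((Real.sqrt 2/2:ℝ)):ℂ) + (((Real.sqrt 2/2:ℝ)):ℂ) * I))
        * (((B:ℝ):ℂ) * ((B:ℝ):ℂ)) / (((C:ℝ):ℂ) * ((C:ℝ):ℂ)) := by ring
    _ = (((3-Real.sqrt 3) : ℝ) : ℂ) / ((6:ℝ):ℂ) := by rw [h1, hB2, h2, one_mul]
    _ = (((3-Real.sqrt 3)/6 : ℝ) : ℂ) := by push_cast; ring

lemma huv_AB : (starRingEnd ℂ) uA * vB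
    = ((1/(2*Real.sqrt 3) : ℝ):ℂ) * (1 + ((1:ℝ):ℂ)*I) := by
  rw [uA, vB]
  simp only [map_div₀, Complex.conj_ofReal]
  have key : (((A * (Real.sqrt 2/2) * B / (C*C)) : ℝ) : ℂ)
      = ((1/(2*Real.sqrt 3) : ℝ) : ℂ) := by
    norm_cast
    exact coeff_id
  calc ((A:ℝ):ℂ)/((C:ℝ):ℂ) * ((((Real.sqrt 2 / 2 : ℝ) : ℂ) + ((Real.sqrt 2 / 2 : ℝ) : ℂ) * I) * ((B:ℝ) : ℂ) / ((C:ℝ) : ℂ))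
      = (((A * (Real.sqrt 2/2) * B / (C*C)) : ℝ) : ℂ) * (1 + ((1:ℝ):ℂ)*I) := by
        push_cast
        field_simp
    _ = ((1/(2*Real.sqrt 3) : ℝ):ℂ) * (1 + ((1:ℝ):ℂ)*I) := by rw [key]

lemma hvu_AB : (starRingEnd ℂ) vB * uA
    = ((1/(2*Real.sqrt 3) : ℝ):ℂ) * (1 + ((-1:ℝ):ℂ)*I) := by
  have h := congrArg (starRingEnd ℂ) huv_AB
  simp only [_root_.map_mul, _root_.map_add, _root_.map_one, Complex.conj_conj,
    Complex.conj_ofReal, Complex.conj_I] at h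
  calc (starRingEnd ℂ) vB * uA = uA * (starRingEnd ℂ) vB := by ring
    _ = ((1/(2*Real.sqrt 3) : ℝ):ℂ) * (1 + ((-1:ℝ):ℂ)*I) := by
        rw [h]; push_cast; ring

lemma tetra_pp : tetra 1 1 = ![uA, vB] := by
  rw [tetra, tetraM, if_pos rfl, if_pos rfl, Matrix.one_mulVec]
  funext i
  fin_cases i <;> simp [ψpp, uA, vB, omega_eq, A, B, C] <;> ring

lemma tetra_mp : tetra (-1) 1 = ![uA, -vB] := by
  rw [tetra, tetraM, if_neg (by norm_num), if_pos rfl]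
  funext i
  fin_cases i <;>
    simp [σZ, Matrix.mulVec, dotProduct, Fin.sum_univ_two, ψpp, uA, vB, omega_eq, A, B, C] <;>
    ring

lemma tetra_pm : tetra 1 (-1) = ![vB, uA] := by
  rw [tetra, tetraM, if_pos rfl, if_neg (by norm_num)]
  funext i
  fin_cases i <;>
    simp [σX, Matrix.mulVec, dotProduct, Fin.sum_univ_two, ψpp, uA, vB, omega_eq, A, B, C] <;>
    ring

lemma tetra_mm : tetra (-1) (-1) = ![-I * vB, I * uA] := by
  rw [tetra, tetraM, if_neg (by norm_num), if_neg (by norm_num)]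
  funext i
  fin_cases i <;>
    simp [σY, Matrix.mulVec, dotProduct, Fin.sum_univ_two, ψpp, uA, vB, omega_eq, A, B, C] <;>
    ring

def mono (j : Fin 4) (a b : ℝ) : ℝ := ![1, a, a*b, b] j
def pfac (j : Fin 4) : ℝ := ![1, (Real.sqrt 3)⁻¹, (Real.sqrt 3)⁻¹, (Real.sqrt 3)⁻¹] j

lemma expVal1_pauli_tetra (a b : ℝ) (ha : a = 1 ∨ a = -1) (hb : b = 1 ∨ b = -1) (j : Fin 4) :
    expVal1 (pauli j) (tetra a b) = ((pfac j * mono j a b : ℝ) : ℂ) := by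
  have hs3 := s3_sq
  have hs3ne := sqrt3_ne
  rcases ha with rfl | rfl <;> rcases hb with rfl | rfl
  · rw [tetra_pp]
    obtain ⟨h0, h1, h2, h3⟩ := expVal1_of_uv uA vB ((3+Real.sqrt 3)/6) ((3-Real.sqrt 3)/6)
      (1/(2*Real.sqrt 3)) 1 huu_A hvv_B huv_AB
    fin_cases j
    · refine h0.trans (congrArg (fun r : ℝ => (r:ℂ)) ?_)
      norm_num [pfac, mono]
      try ring
      try field_simp
      try ring
      try nlinarith [s3_sq]
    · refine h1.trans (congrArg (fun r : ℝ => (r:ℂ)) ?_)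
      norm_num [pfac, mono]
      try ring
      try field_simp
      try ring
      try nlinarith [s3_sq]
    · refine h2.trans (congrArg (fun r : ℝ => (r:ℂ)) ?_)
      norm_num [pfac, mono]
      try ring
      try field_simp
      try ring
      try nlinarith [s3_sq]
    · refine h3.trans (congrArg (fun r : ℝ => (r:ℂ)) ?_)
      norm_num [pfac, mono]
      try ring
      try field_simp
      try ring
      try nlinarith [s3_sq]
  · rw [tetra_pm]
    obtain ⟨h0, h1, h2, h3⟩ := expVal1_of_uv vB uA ((3-Real.sqrt 3)/6) ((3+Real.sqrt 3)/6)
      (1/(2*Real.sqrt 3)) (-1) hvv_B huu_A hvu_AB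
    fin_cases j
    · refine h0.trans (congrArg (fun r : ℝ => (r:ℂ)) ?_)
      norm_num [pfac, mono]
      try ring
      try field_simp
      try ring
      try nlinarith [s3_sq]
    · refine h1.trans (congrArg (fun r : ℝ => (r:ℂ)) ?_)
      norm_num [pfac, mono]
      try ring
      try field_simp
      try ring
      try nlinarith [s3_sq]
    · refine h2.trans (congrArg (fun r : ℝ => (r:ℂ)) ?_)
      norm_num [pfac, mono]
      try ring
      try field_simp
      try ring
      try nlinarith [s3_sq]
    · refine h3.trans (congrArg (fun r : ℝ => (r:ℂ)) ?_)
      norm_num [pfac, mono]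
      try ring
      try field_simp
      try ring
      try nlinarith [s3_sq]
  · rw [tetra_mp]
    have hvv' : (starRingEnd ℂ) (-vB) * (-vB) = (((3-Real.sqrt 3)/6 : ℝ):ℂ) := by
      rw [map_neg]
      calc -(starRingEnd ℂ) vB * -vB = (starRingEnd ℂ) vB * vB := by ring
        _ = (((3-Real.sqrt 3)/6 : ℝ):ℂ) := hvv_B
    have huv' : (starRingEnd ℂ) uA * (-vB)
        = ((-(1/(2*Real.sqrt 3)) : ℝ):ℂ) * (1 + ((1:ℝ):ℂ)*I) := by
      have h := huv_AB
      push_cast at h ⊢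
      linear_combination -h
    obtain ⟨h0, h1, h2, h3⟩ := expVal1_of_uv uA (-vB) ((3+Real.sqrt 3)/6) ((3-Real.sqrt 3)/6)
      (-(1/(2*Real.sqrt 3))) 1 huu_A hvv' huv'
    fin_cases j
    · refine h0.trans (congrArg (fun r : ℝ => (r:ℂ)) ?_)
      norm_num [pfac, mono]
      try ring
      try field_simp
      try ring
      try nlinarith [s3_sq]
    · refine h1.trans (congrArg (fun r : ℝ => (r:ℂ)) ?_)
      norm_num [pfac, mono]
      try ring
      try field_simp
      try ring
      try nlinarith [s3_sq]
    · refine h2.trans (congrArg (fun r : ℝ => (r:ℂ)) ?_)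
      norm_num [pfac, mono]
      try ring
      try field_simp
      try ring
      try nlinarith [s3_sq]
    · refine h3.trans (congrArg (fun r : ℝ => (r:ℂ)) ?_)
      norm_num [pfac, mono]
      try ring
      try field_simp
      try ring
      try nlinarith [s3_sq]
  · rw [tetra_mm]
    have huu' : (starRingEnd ℂ) (-I*vB) * (-I*vB) = (((3-Real.sqrt 3)/6 : ℝ):ℂ) := by
      simp only [_root_.map_mul, map_neg, Complex.conj_I]
      linear_combination hvv_B - (starRingEnd ℂ) vB * vB * Complex.I_sq
    have hvv' : (starRingEnd ℂ) (I*uA) * (I*uA) = (((3+Real.sqrt 3)/6 : ℝ):ℂ) := by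
      simp only [_root_.map_mul, Complex.conj_I]
      linear_combination huu_A - (starRingEnd ℂ) uA * uA * Complex.I_sq
    have huv' : (starRingEnd ℂ) (-I*vB) * (I*uA)
        = ((-(1/(2*Real.sqrt 3)) : ℝ):ℂ) * (1 + ((-1:ℝ):ℂ)*I) := by
      simp only [_root_.map_mul, map_neg, Complex.conj_I]
      have h := hvu_AB
      push_cast at h ⊢
      linear_combination -h + ((starRingEnd ℂ) vB * uA) * Complex.I_sq
    obtain ⟨h0, h1, h2, h3⟩ := expVal1_of_uv (-I*vB) (I*uA) ((3-Real.sqrt 3)/6)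
      ((3+Real.sqrt 3)/6) (-(1/(2*Real.sqrt 3))) (-1) huu' hvv' huv'
    fin_cases j
    · refine h0.trans (congrArg (fun r : ℝ => (r:ℂ)) ?_)
      norm_num [pfac, mono]
      try ring
      try field_simp
      try ring
      try nlinarith [s3_sq]
    · refine h1.trans (congrArg (fun r : ℝ => (r:ℂ)) ?_)
      norm_num [pfac, mono]
      try ring
      try field_simp
      try ring
      try nlinarith [s3_sq]
    · refine h2.trans (congrArg (fun r : ℝ => (r:ℂ)) ?_)
      norm_num [pfac, mono]
      try ring
      try field_simp
      try ring
      try nlinarith [s3_sq]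
    · refine h3.trans (congrArg (fun r : ℝ => (r:ℂ)) ?_)
      norm_num [pfac, mono]
      try ring
      try field_simp
      try ring
      try nlinarith [s3_sq]

lemma tetra_norm (a b : ℝ) (ha : a = 1 ∨ a = -1) (hb : b = 1 ∨ b = -1) :
    ∑ c, ‖tetra a b c‖ ^ 2 = 1 := by
  have key := expVal1_pauli_tetra a b ha hb 0
  have hfun : tetra a b = ![tetra a b 0, tetra a b 1] := by
    funext i; fin_cases i <;> rfl
  rw [hfun, eP0] at key
  have e0 : (starRingEnd ℂ) (tetra a b 0) * (tetra a b 0)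
      = (Complex.normSq (tetra a b 0) : ℂ) := by
    rw [mul_comm, Complex.mul_conj]
  have e1 : (starRingEnd ℂ) (tetra a b 1) * (tetra a b 1)
      = (Complex.normSq (tetra a b 1) : ℂ) := by
    rw [mul_comm, Complex.mul_conj]
  rw [e0, e1] at key
  have key' : Complex.normSq (tetra a b 0) + Complex.normSq (tetra a b 1)
      = pfac 0 * mono 0 a b := by exact_mod_cast key
  have hval : pfac 0 * mono 0 a b = 1 := by norm_num [pfac, mono]
  rw [Fin.sum_univ_two, Complex.sq_norm, Complex.sq_norm]
  rw [key', hval]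


lemma expVal_le_iSup {m : Type*} [Fintype m] [DecidableEq m] [Nonempty m]
    (M : Matrix m m ℂ) (hM : M.IsHermitian) (Ψ : m → ℂ)
    (hΨ : ∑ v, ‖Ψ v‖ ^ 2 = 1) (r : ℝ)
    (hr : ∑ v, ∑ w, (starRingEnd ℂ) (Ψ v) * M v w * Ψ w = (r : ℂ)) :
    r ≤ ⨆ v, hM.eigenvalues v := by
  set U : Matrix m m ℂ := (hM.eigenvectorUnitary : Matrix m m ℂ) with hU
  set c : m → ℂ := (star U) *ᵥ Ψ with hc
  have hdot : ∀ N : Matrix m m ℂ,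
      ∑ v, ∑ w, (starRingEnd ℂ) (Ψ v) * N v w * Ψ w = star Ψ ⬝ᵥ (N *ᵥ Ψ) := by
    intro N
    simp only [dotProduct, mulVec, Pi.star_apply, RCLike.star_def, Finset.mul_sum]
    exact Finset.sum_congr rfl fun v _ => Finset.sum_congr rfl fun w _ => by ring
  have hUni : U * star U = 1 := (Matrix.mem_unitaryGroup_iff).mp hM.eigenvectorUnitary.2
  have hspec : M = U * Matrix.diagonal (RCLike.ofReal ∘ hM.eigenvalues) * star U :=
    hM.spectral_theorem
  have key : star Ψ ⬝ᵥ (M *ᵥ Ψ)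
      = ∑ j, (hM.eigenvalues j : ℂ) * ((starRingEnd ℂ) (c j) * c j) := by
    conv_lhs => rw [hspec]
    rw [← Matrix.mulVec_mulVec, ← Matrix.mulVec_mulVec]
    rw [Matrix.dotProduct_mulVec]
    have hvm : star Ψ ᵥ* U = star c := by
      rw [hc, Matrix.star_mulVec, ← Matrix.star_eq_conjTranspose, star_star]
    rw [hvm]
    rw [← hc]
    have hdiag : (Matrix.diagonal (RCLike.ofReal ∘ hM.eigenvalues)) *ᵥ c
        = fun j => (hM.eigenvalues j : ℂ) * c j := by
      funext j
      rw [Matrix.mulVec_diagonal]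
      rfl
    rw [hdiag, dotProduct]
    apply Finset.sum_congr rfl
    intro j _
    simp only [Pi.star_apply, RCLike.star_def]
    ring
  have hnorm : ∑ j, Complex.normSq (c j) = 1 := by
    have h1 : star c ⬝ᵥ c = star Ψ ⬝ᵥ Ψ := by
      rw [hc, Matrix.star_mulVec, ← Matrix.star_eq_conjTranspose, star_star, ← Matrix.dotProduct_mulVec,
        Matrix.mulVec_mulVec, hUni, Matrix.one_mulVec]
    have h2 : star c ⬝ᵥ c = ((∑ j, Complex.normSq (c j) : ℝ) : ℂ) := by
      rw [dotProduct]
      push_cast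
      apply Finset.sum_congr rfl
      intro j _
      simp only [Pi.star_apply, RCLike.star_def]
      rw [mul_comm, Complex.mul_conj]
    have h3 : star Ψ ⬝ᵥ Ψ = ((∑ v, ‖Ψ v‖ ^ 2 : ℝ) : ℂ) := by
      rw [dotProduct]
      push_cast
      apply Finset.sum_congr rfl
      intro v _
      simp only [Pi.star_apply, RCLike.star_def]
      rw [mul_comm, Complex.mul_conj]
      norm_cast
      exact (Complex.sq_norm _).symm
    have := h2.symm.trans (h1.trans h3)
    rw [hΨ] at this
    exact_mod_cast this
  have hreal : r = ∑ j, hM.eigenvalues j * Complex.normSq (c j) := by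
    have h4 : (r : ℂ) = ((∑ j, hM.eigenvalues j * Complex.normSq (c j) : ℝ) : ℂ) := by
      rw [← hr, hdot, key]
      push_cast
      apply Finset.sum_congr rfl
      intro j _
      rw [mul_comm ((starRingEnd ℂ) (c j)) (c j), Complex.mul_conj]
    exact_mod_cast h4
  have hbdd : BddAbove (Set.range hM.eigenvalues) := Set.Finite.bddAbove (Set.finite_range _)
  have hle : ∀ j, hM.eigenvalues j ≤ ⨆ v, hM.eigenvalues v := fun j => le_ciSup hbdd j
  rw [hreal]
  calc ∑ j, hM.eigenvalues j * Complex.normSq (c j)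
      ≤ ∑ j, (⨆ v, hM.eigenvalues v) * Complex.normSq (c j) := by
        apply Finset.sum_le_sum
        intro j _
        exact mul_le_mul_of_nonneg_right (hle j) (Complex.normSq_nonneg _)
    _ = (⨆ v, hM.eigenvalues v) * ∑ j, Complex.normSq (c j) := by rw [Finset.mul_sum]
    _ = ⨆ v, hM.eigenvalues v := by rw [hnorm, mul_one]



namespace Glue
open Comb TetraFacts

variable {n : ℕ}

def vmem : Fin 4 → Bool → Bool := fun j c => ![false, !c, true, c] j

def varSet (s : Fin n → Fin 4) : Finset (Fin n × Bool) :=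
  Finset.univ.filter (fun p => vmem (s p.1) p.2 = true)

lemma mem_varSet {s : Fin n → Fin 4} {p : Fin n × Bool} :
    p ∈ varSet s ↔ vmem (s p.1) p.2 = true := by simp [varSet]

lemma vmem_inj : ∀ j j' : Fin 4, vmem j false = vmem j' false →
    vmem j true = vmem j' true → j = j' := by decide

lemma vmem_zero : ∀ j : Fin 4, j ≠ 0 → vmem j (![false, false, true, true] j) = true := by
  decide

lemma vmem_ne_zero : ∀ (j : Fin 4) (c : Bool), vmem j c = true → j ≠ 0 := by decide

lemma varSet_injective : Function.Injective (varSet (n := n)) := by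
  intro s t h
  funext i
  have hf : ((i, false) ∈ varSet s) ↔ ((i, false) ∈ varSet t) := by rw [h]
  have ht : ((i, true) ∈ varSet s) ↔ ((i, true) ∈ varSet t) := by rw [h]
  simp only [mem_varSet] at hf ht
  exact vmem_inj _ _ (by rw [Bool.eq_iff_iff]; exact hf) (by rw [Bool.eq_iff_iff]; exact ht)

lemma varSet_eq_empty {s : Fin n → Fin 4} (h : varSet s = ∅) : s = fun _ => 0 := by
  funext i
  by_contra hne
  have : (i, ![false, false, true, true] (s i)) ∈ varSet s :=
    mem_varSet.mpr (vmem_zero (s i) hne)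
  rw [h] at this
  exact Finset.notMem_empty _ this

lemma varSet_card_le (s : Fin n → Fin 4) : (varSet s).card ≤ 2 * weight s := by
  have hsub : varSet s ⊆ (Finset.univ.filter (fun i => s i ≠ 0)) ×ˢ (Finset.univ : Finset Bool) := by
    intro p hp
    rw [mem_varSet] at hp
    rw [Finset.mem_product, Finset.mem_filter]
    exact ⟨⟨Finset.mem_univ _, vmem_ne_zero _ _ hp⟩, Finset.mem_univ _⟩
  calc (varSet s).card ≤ _ := Finset.card_le_card hsub
    _ = weight s * 2 := by rw [Finset.card_product, weight]; simp
    _ = 2 * weight s := by ring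

def coeffOf (Hhat : (Fin n → Fin 4) → ℝ) (s : Fin n → Fin 4) : ℝ :=
  Hhat s * ((Real.sqrt 3)⁻¹) ^ weight s

def gOf (Hhat : (Fin n → Fin 4) → ℝ) : Finset (Fin n × Bool) → ℝ :=
  fun S => ∑ s ∈ Finset.univ.filter (fun s : Fin n → Fin 4 => varSet s = S), coeffOf Hhat s

lemma gOf_varSet (Hhat : (Fin n → Fin 4) → ℝ) (s : Fin n → Fin 4) :
    gOf Hhat (varSet s) = coeffOf Hhat s := by
  rw [gOf, Finset.sum_eq_single_of_mem s (by simp)]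
  intro t ht htne
  exact absurd (varSet_injective (Finset.mem_filter.mp ht).2) htne

lemma gOf_ne_zero {Hhat : (Fin n → Fin 4) → ℝ} {S : Finset (Fin n × Bool)}
    (h : gOf Hhat S ≠ 0) : ∃ s, varSet s = S ∧ Hhat s ≠ 0 := by
  by_contra hc
  push_neg at hc
  apply h
  apply Finset.sum_eq_zero
  intro s hs
  rw [Finset.mem_filter] at hs
  rw [coeffOf, hc s hs.2, zero_mul]

lemma sqrt3_inv_pos : 0 < (Real.sqrt 3)⁻¹ := by
  rw [inv_pos]
  have := s3_sq
  nlinarith [s3_nonneg]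

lemma sqrt3_inv_le_one : (Real.sqrt 3)⁻¹ ≤ 1 := by
  rw [inv_le_one_iff₀]
  right
  nlinarith [s3_sq, s3_nonneg]

lemma gOf_empty {Hhat : (Fin n → Fin 4) → ℝ} (htr : Hhat (fun _ => 0) = 0) :
    gOf Hhat ∅ = 0 := by
  rw [gOf]
  apply Finset.sum_eq_zero
  intro s hs
  rw [Finset.mem_filter] at hs
  rw [coeffOf, varSet_eq_empty hs.2, htr, zero_mul]

lemma gOf_deg {Hhat : (Fin n → Fin 4) → ℝ} {k : ℕ}
    (hdeg : ∀ s, Hhat s ≠ 0 → weight s ≤ k) :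
    ∀ S, gOf Hhat S ≠ 0 → S.card ≤ 2 * k := by
  intro S hS
  obtain ⟨s, rfl, hs⟩ := gOf_ne_zero hS
  calc (varSet s).card ≤ 2 * weight s := varSet_card_le s
    _ ≤ 2 * k := by have := hdeg s hs; omega

lemma gOf_ell {Hhat : (Fin n → Fin 4) → ℝ} {ℓ : ℕ}
    (hℓ : ∀ i : Fin n,
      (Finset.univ.filter (fun s : Fin n → Fin 4 => Hhat s ≠ 0 ∧ s i ≠ 0)).card ≤ ℓ) :
    ∀ v : Fin n × Bool,
      (Finset.univ.filter (fun S : Finset (Fin n × Bool) => gOf Hhat S ≠ 0 ∧ v ∈ S)).card ≤ ℓ := by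
  intro v
  have hsub : Finset.univ.filter (fun S : Finset (Fin n × Bool) => gOf Hhat S ≠ 0 ∧ v ∈ S)
      ⊆ (Finset.univ.filter (fun s : Fin n → Fin 4 => Hhat s ≠ 0 ∧ s v.1 ≠ 0)).image varSet := by
    intro S hS
    rw [Finset.mem_filter] at hS
    obtain ⟨s, rfl, hs⟩ := gOf_ne_zero hS.2.1
    rw [Finset.mem_image]
    refine ⟨s, ?_, rfl⟩
    rw [Finset.mem_filter]
    have hv : vmem (s v.1) v.2 = true := mem_varSet.mp hS.2.2
    exact ⟨Finset.mem_univ _, hs, vmem_ne_zero _ _ hv⟩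
  calc _ ≤ _ := Finset.card_le_card hsub
    _ ≤ _ := Finset.card_image_le
    _ ≤ ℓ := hℓ v.1

lemma Wt_lower {Hhat : (Fin n → Fin 4) → ℝ} {k : ℕ}
    (htr : Hhat (fun _ => 0) = 0)
    (hdeg : ∀ s, Hhat s ≠ 0 → weight s ≤ k) :
    ((Real.sqrt 3)⁻¹) ^ k * (∑ s : Fin n → Fin 4, |Hhat s|) ≤ Wt (gOf Hhat) := by
  have step1 : ((Real.sqrt 3)⁻¹) ^ k * (∑ s : Fin n → Fin 4, |Hhat s|)
      ≤ ∑ s : Fin n → Fin 4, |gOf Hhat (varSet s)| := by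
    rw [Finset.mul_sum]
    apply Finset.sum_le_sum
    intro s _
    rw [gOf_varSet, coeffOf, abs_mul]
    by_cases hz : Hhat s = 0
    · rw [hz]; simp
    · have h1 : ((Real.sqrt 3)⁻¹) ^ k ≤ ((Real.sqrt 3)⁻¹) ^ weight s :=
        pow_le_pow_of_le_one (le_of_lt sqrt3_inv_pos) sqrt3_inv_le_one (hdeg s hz)
      have h2 : |((Real.sqrt 3)⁻¹) ^ weight s| = ((Real.sqrt 3)⁻¹) ^ weight s :=
        _root_.abs_of_nonneg (by positivity)
      rw [mul_comm (|Hhat s|), h2]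
      exact mul_le_mul_of_nonneg_right h1 (abs_nonneg _)
  have step2 : ∑ s : Fin n → Fin 4, |gOf Hhat (varSet s)|
      = ∑ S ∈ Finset.univ.image (varSet (n := n)), |gOf Hhat S| := by
    rw [Finset.sum_image (fun a _ b _ h => varSet_injective h)]
  have step3 : ∑ S ∈ Finset.univ.image (varSet (n := n)), |gOf Hhat S| ≤ Wt (gOf Hhat)
      + |gOf Hhat ∅| := by
    rw [Wt]
    by_cases hmem : ∅ ∈ Finset.univ.image (varSet (n := n))
    · rw [← Finset.sum_erase_add _ _ hmem]
      have hsub2 : (Finset.univ.image (varSet (n := n))).erase ∅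
          ⊆ Finset.univ.filter (fun S : Finset (Fin n × Bool) => S ≠ ∅) := by
        intro S hS
        rw [Finset.mem_erase] at hS
        rw [Finset.mem_filter]
        exact ⟨Finset.mem_univ _, hS.1⟩
      have hmono := Finset.sum_le_sum_of_subset_of_nonneg hsub2
        (fun S _ _ => abs_nonneg (gOf Hhat S))
      linarith
    · have h0 : (0:ℝ) ≤ |gOf Hhat ∅| := abs_nonneg _
      have : ∑ S ∈ Finset.univ.image (varSet (n := n)), |gOf Hhat S|
          ≤ ∑ S ∈ Finset.univ.filter (fun S : Finset (Fin n × Bool) => S ≠ ∅), |gOf Hhat S| := by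
        apply Finset.sum_le_sum_of_subset_of_nonneg
        · intro S hS
          rw [Finset.mem_filter]
          refine ⟨Finset.mem_univ _, ?_⟩
          intro he
          rw [he] at hS
          exact hmem hS
        · intro _ _ _; exact abs_nonneg _
      linarith
  rw [gOf_empty htr] at step3
  simp only [abs_zero, add_zero] at step3
  linarith

end Glue



namespace Glue
open Comb TetraFacts

lemma sum_prod_swap {n : ℕ} {β : Type*} [CommSemiring β] (F : Fin n → Fin 2 → β) :
    ∏ i, ∑ a, F i a = ∑ v : Fin n → Fin 2, ∏ i, F i (v i) := by
  rw [Finset.prod_univ_sum]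
  rw [Fintype.piFinset_univ]

lemma expValN_pauliString {n : ℕ} (s : Fin n → Fin 4) (ψ : Fin n → Fin 2 → ℂ) :
    expValN (pauliString s) (prodState ψ) = ∏ i, expVal1 (pauli (s i)) (ψ i) := by
  have hterm : ∀ v w : Fin n → Fin 2,
      (starRingEnd ℂ) (prodState ψ v) * pauliString s v w * prodState ψ w
        = ∏ i, ((starRingEnd ℂ) (ψ i (v i)) * pauli (s i) (v i) (w i) * ψ i (w i)) := by
    intro v w
    rw [prodState, prodState, pauliString, map_prod, ← Finset.prod_mul_distrib,
      ← Finset.prod_mul_distrib]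
  symm
  calc ∏ i, expVal1 (pauli (s i)) (ψ i)
      = ∏ i, ∑ a, ∑ b, ((starRingEnd ℂ) (ψ i a) * pauli (s i) a b * ψ i b) := rfl
    _ = ∑ v : Fin n → Fin 2, ∏ i, ∑ b,
          ((starRingEnd ℂ) (ψ i (v i)) * pauli (s i) (v i) b * ψ i b) :=
        sum_prod_swap (fun i a => ∑ b, ((starRingEnd ℂ) (ψ i a) * pauli (s i) a b * ψ i b))
    _ = ∑ v : Fin n → Fin 2, ∑ w : Fin n → Fin 2, ∏ i,
          ((starRingEnd ℂ) (ψ i (v i)) * pauli (s i) (v i) (w i) * ψ i (w i)) :=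
        Finset.sum_congr rfl (fun v _ =>
          sum_prod_swap (fun i b => (starRingEnd ℂ) (ψ i (v i)) * pauli (s i) (v i) b * ψ i b))
    _ = expValN (pauliString s) (prodState ψ) := by
        rw [expValN]
        exact Finset.sum_congr rfl fun v _ => Finset.sum_congr rfl fun w _ => (hterm v w).symm

lemma expValN_hamOf {n : ℕ} (Hhat : (Fin n → Fin 4) → ℝ) (Ψ : (Fin n → Fin 2) → ℂ) :
    expValN (hamOf Hhat) Ψ = ∑ s, (Hhat s : ℂ) * expValN (pauliString s) Ψ := by
  have hR : ∀ s ∈ (Finset.univ : Finset (Fin n → Fin 4)), (Hhat s : ℂ) * expValN (pauliString s) Ψ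
      = ∑ v, ∑ w, (Hhat s : ℂ) * ((starRingEnd ℂ) (Ψ v) * pauliString s v w * Ψ w) := by
    intro s _
    rw [expValN, Finset.mul_sum]
    exact Finset.sum_congr rfl fun v _ => Finset.mul_sum _ _ _
  rw [Finset.sum_congr rfl hR]
  rw [Finset.sum_comm]
  rw [expValN]
  apply Finset.sum_congr rfl
  intro v _
  rw [Finset.sum_comm]
  apply Finset.sum_congr rfl
  intro w _
  rw [hamOf, Matrix.sum_apply]
  rw [Finset.mul_sum, Finset.sum_mul]
  apply Finset.sum_congr rfl
  intro t _
  rw [Matrix.smul_apply, smul_eq_mul]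
  ring

lemma evalP_gOf {n : ℕ} (Hhat : (Fin n → Fin 4) → ℝ) (x : Fin n × Bool → ℝ) :
    evalP (gOf Hhat) x = ∑ s, coeffOf Hhat s * chi x (varSet s) := by
  rw [evalP]
  have h1 : ∀ S ∈ (Finset.univ : Finset (Finset (Fin n × Bool))),
      gOf Hhat S * chi x S
        = ∑ s ∈ Finset.univ.filter (fun s : Fin n → Fin 4 => varSet s = S),
            coeffOf Hhat s * chi x (varSet s) := by
    intro S _
    rw [gOf, Finset.sum_mul]
    apply Finset.sum_congr rfl
    intro s hs
    rw [(Finset.mem_filter.mp hs).2]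
  rw [Finset.sum_congr rfl h1]
  exact Finset.sum_fiberwise _ _ _

lemma pfac_eq (j : Fin 4) : pfac j = if j = 0 then 1 else (Real.sqrt 3)⁻¹ := by
  fin_cases j <;> simp [pfac]

lemma prod_pfac {n : ℕ} (s : Fin n → Fin 4) :
    ∏ i, pfac (s i) = ((Real.sqrt 3)⁻¹) ^ weight s := by
  have h : ∀ i ∈ Finset.univ, pfac (s i)
      = if s i ≠ 0 then (Real.sqrt 3)⁻¹ else 1 := by
    intro i _
    rw [pfac_eq]
    by_cases hz : s i = 0 <;> simp [hz]
  rw [Finset.prod_congr rfl h, Finset.prod_ite, Finset.prod_const, Finset.prod_const_one,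
    mul_one, weight]

lemma mono_eq (j : Fin 4) (a b : ℝ) :
    mono j a b = (if vmem j true then b else 1) * (if vmem j false then a else 1) := by
  fin_cases j <;> simp [mono, vmem] <;> ring

lemma chi_varSet {n : ℕ} (x : Fin n × Bool → ℝ) (s : Fin n → Fin 4) :
    chi x (varSet s) = ∏ i, mono (s i) (x (i, false)) (x (i, true)) := by
  rw [chi, varSet, Finset.prod_filter, Fintype.prod_prod_type]
  apply Finset.prod_congr rfl
  intro i _
  rw [Fintype.prod_bool, mono_eq]

lemma expVal_eq {n : ℕ} (Hhat : (Fin n → Fin 4) → ℝ) (x : Fin n × Bool → ℝ)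
    (hx : ∀ v, x v = 1 ∨ x v = -1) :
    expValN (hamOf Hhat) (prodState fun i => tetra (x (i, false)) (x (i, true)))
      = ((evalP (gOf Hhat) x : ℝ) : ℂ) := by
  rw [expValN_hamOf, evalP_gOf]
  push_cast
  apply Finset.sum_congr rfl
  intro s _
  rw [expValN_pauliString]
  have h1 : ∀ i ∈ Finset.univ, expVal1 (pauli (s i)) (tetra (x (i, false)) (x (i, true)))
      = ((pfac (s i) * mono (s i) (x (i, false)) (x (i, true)) : ℝ) : ℂ) := by
    intro i _
    exact expVal1_pauli_tetra _ _ (hx (i, false)) (hx (i, true)) (s i)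
  rw [Finset.prod_congr rfl h1]
  rw [← Complex.ofReal_prod, Finset.prod_mul_distrib, prod_pfac, ← chi_varSet, coeffOf]
  push_cast
  ring

lemma prodState_norm {n : ℕ} (ψ : Fin n → Fin 2 → ℂ)
    (h : ∀ i, ∑ b, ‖ψ i b‖ ^ 2 = 1) :
    ∑ v, ‖prodState ψ v‖ ^ 2 = 1 := by
  have h1 : ∀ v ∈ (Finset.univ : Finset (Fin n → Fin 2)),
      ‖prodState ψ v‖ ^ 2 = ∏ i, ‖ψ i (v i)‖ ^ 2 := by
    intro v _
    rw [prodState, Complex.norm_prod, ← Finset.prod_pow]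
  rw [Finset.sum_congr rfl h1, ← sum_prod_swap (fun i a => ‖ψ i a‖ ^ 2)]
  rw [Finset.prod_congr rfl (fun i _ => h i), Finset.prod_const_one]

end Glue



theorem stmt_15 (n k ℓ : ℕ) (Hhat : (Fin n → Fin 4) → ℝ)
    (hH : (hamOf Hhat).IsHermitian)
    (htr : Hhat (fun _ => 0) = 0)
    (hdeg : ∀ s, Hhat s ≠ 0 → weight s ≤ k)
    (hℓ : ∀ i : Fin n,
      (Finset.univ.filter (fun s : Fin n → Fin 4 => Hhat s ≠ 0 ∧ s i ≠ 0)).card ≤ ℓ) :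
    ((Real.sqrt 3)⁻¹) ^ k * (∑ s : Fin n → Fin 4, |Hhat s|) / (4 * k * ℓ)
        ≤ (⨆ v, hH.eigenvalues v) ∧
    ∃ ψ : Fin n → Fin 2 → ℂ, (∀ i, ∑ b, ‖ψ i b‖ ^ 2 = 1) ∧
      ∃ r : ℝ, expValN (hamOf Hhat) (prodState ψ) = (r : ℂ) ∧
        ((Real.sqrt 3)⁻¹) ^ k * (∑ s : Fin n → Fin 4, |Hhat s|) / (4 * k * ℓ) ≤ r := by
  obtain ⟨x, hxpm, hWx⟩ := Comb.main_comb (2*k) ℓ (Comb.suppNE (Glue.gOf Hhat)).card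
    (Glue.gOf Hhat) le_rfl (Glue.gOf_deg hdeg) (Glue.gOf_ell hℓ)
  set r := Comb.evalP (Glue.gOf Hhat) x with hrdef
  set ψ : Fin n → Fin 2 → ℂ := fun i => tetra (x (i, false)) (x (i, true)) with hψ
  have hnorm : ∀ i, ∑ b, ‖ψ i b‖ ^ 2 = 1 :=
    fun i => tetra_norm _ _ (hxpm (i, false)) (hxpm (i, true))
  have hexp : expValN (hamOf Hhat) (prodState ψ) = (r : ℂ) := Glue.expVal_eq Hhat x hxpm
  have hg0 : Glue.gOf Hhat ∅ = 0 := Glue.gOf_empty htr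
  have hWlb := Glue.Wt_lower (Hhat := Hhat) (k := k) htr hdeg
  have hWnn : 0 ≤ Comb.Wt (Glue.gOf Hhat) := Finset.sum_nonneg fun _ _ => abs_nonneg _
  rw [hg0, sub_zero] at hWx
  push_cast at hWx
  have hmain : ((Real.sqrt 3)⁻¹) ^ k * (∑ s : Fin n → Fin 4, |Hhat s|) / (4 * k * ℓ) ≤ r := by
    by_cases hkl : k = 0 ∨ ℓ = 0
    · have hH0 : ∀ s, Hhat s = 0 := by
        intro s
        by_contra hs
        rcases hkl with hk | hl
        · have hw := hdeg s hs
          rw [hk, Nat.le_zero, weight, Finset.card_eq_zero] at hw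
          have hs0 : s = fun _ => 0 := by
            funext i
            by_contra hi
            have hmem : i ∈ Finset.univ.filter (fun i => s i ≠ 0) := by simp [hi]
            rw [hw] at hmem
            exact Finset.notMem_empty _ hmem
          rw [hs0] at hs
          exact hs htr
        · have hne : s ≠ fun _ => 0 := fun h => hs (h ▸ htr)
          obtain ⟨i, hi⟩ := Function.ne_iff.mp hne
          have h1 := hℓ i
          rw [hl, Nat.le_zero, Finset.card_eq_zero] at h1
          have hmem : s ∈ Finset.univ.filter
              (fun s : Fin n → Fin 4 => Hhat s ≠ 0 ∧ s i ≠ 0) := by simp [hs, hi]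
          rw [h1] at hmem
          exact Finset.notMem_empty _ hmem
      have hsum0 : ∑ s : Fin n → Fin 4, |Hhat s| = 0 :=
        Finset.sum_eq_zero fun s _ => by rw [hH0 s, abs_zero]
      have hg00 : ∀ S, Glue.gOf Hhat S = 0 := fun S =>
        Finset.sum_eq_zero fun s _ => by rw [Glue.coeffOf, hH0, zero_mul]
      have hr0 : r = 0 := by
        rw [hrdef, Comb.evalP]
        exact Finset.sum_eq_zero fun S _ => by rw [hg00 S, zero_mul]
      rw [hsum0, hr0]
      simp
    · push_neg at hkl
      have hk1 : (1:ℝ) ≤ (k:ℝ) := by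
        exact_mod_cast Nat.one_le_iff_ne_zero.mpr hkl.1
      have hl1 : (1:ℝ) ≤ (ℓ:ℝ) := by
        exact_mod_cast Nat.one_le_iff_ne_zero.mpr hkl.2
      have hpos : (0:ℝ) < 4 * k * ℓ := by nlinarith
      rw [div_le_iff₀ hpos]
      nlinarith [hWlb, hWx]
  refine ⟨?_, ψ, hnorm, r, hexp, hmain⟩
  have hn := Glue.prodState_norm ψ hnorm
  exact le_trans hmain (expVal_le_iSup (hamOf Hhat) hH (prodState ψ) hn r hexp)
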